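/- For a connected weighted graph with weighted Laplacian L_g, the algebraic connectivity satisfies λ_2(L_g) ≥ 2 / (n · R̃_max), where R̃_max is the maximum effective resistance over all vertex pairs; consequently λ_2(L_g) ≥ 2 / (n · D · R_max), where D is the graph diameter and R_max is the maximum effective resistance over edges. -/

import Mathlib

open Matrix BigOperators

/-- `P` is the Moore–Penrose pseudoinverse of `M`. -/
def IsMoorePenrose {n : ℕ} (M P : Matrix (Fin n) (Fin n) ℝ) : Prop :=
  M * P * M = M ∧ P * M * P = P ∧ (M * P)ᵀ = M * P ∧ (P * M)ᵀ = P * M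

lemma mp_unique {n : ℕ} {M P Q : Matrix (Fin n) (Fin n) ℝ}
    (hP : IsMoorePenrose M P) (hQ : IsMoorePenrose M Q) : P = Q := by
  obtain ⟨hP1, hP2, hP3, hP4⟩ := hP
  obtain ⟨hQ1, hQ2, hQ3, hQ4⟩ := hQ
  have hMt : Mᵀ = Mᵀ * Qᵀ * Mᵀ := by
    conv_lhs => rw [← hQ1]
    rw [transpose_mul, transpose_mul, mul_assoc]
  have hPM : P * M = Q * M := by
    calc P * M = (P * M)ᵀ := hP4.symm
    _ = Mᵀ * Pᵀ := by rw [transpose_mul]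
    _ = Mᵀ * Qᵀ * Mᵀ * Pᵀ := by rw [← hMt]
    _ = Mᵀ * Qᵀ * (P * M)ᵀ := by rw [mul_assoc, transpose_mul]
    _ = Mᵀ * Qᵀ * (P * M) := by rw [hP4]
    _ = (Q * M)ᵀ * (P * M) := by rw [transpose_mul]
    _ = (Q * M) * (P * M) := by rw [hQ4]
    _ = Q * (M * P * M) := by rw [mul_assoc, ← mul_assoc M P M]
    _ = Q * M := by rw [hP1]
  have hMP : M * P = M * Q := by
    calc M * P = (M * P)ᵀ := hP3.symm
    _ = Pᵀ * Mᵀ := by rw [transpose_mul]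
    _ = Pᵀ * (Mᵀ * Qᵀ * Mᵀ) := by rw [← hMt]
    _ = Pᵀ * Mᵀ * (Qᵀ * Mᵀ) := by rw [mul_assoc, mul_assoc]
    _ = (M * P)ᵀ * (M * Q)ᵀ := by rw [transpose_mul, transpose_mul]
    _ = (M * P) * (M * Q) := by rw [hP3, hQ3]
    _ = (M * P * M) * Q := by rw [mul_assoc, ← mul_assoc M P (M * Q), ← mul_assoc]
    _ = M * Q := by rw [hP1]
  calc P = P * M * P := hP2.symm
  _ = Q * M * P := by rw [hPM]
  _ = Q * (M * P) := by rw [mul_assoc]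
  _ = Q * (M * Q) := by rw [hMP]
  _ = Q * M * Q := by rw [mul_assoc]
  _ = Q := hQ2

lemma mp_symm {n : ℕ} {M P : Matrix (Fin n) (Fin n) ℝ} (hM : Mᵀ = M)
    (hP : IsMoorePenrose M P) : Pᵀ = P := by
  obtain ⟨hP1, hP2, hP3, hP4⟩ := hP
  refine mp_unique ⟨?_, ?_, ?_, ?_⟩ ⟨hP1, hP2, hP3, hP4⟩
  · calc M * Pᵀ * M = (Mᵀ * P * Mᵀ)ᵀ := by simp [transpose_mul, mul_assoc]
    _ = (M * P * M)ᵀ := by rw [hM]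
    _ = Mᵀ := by rw [hP1]
    _ = M := hM
  · calc Pᵀ * M * Pᵀ = (P * Mᵀ * P)ᵀ := by simp [transpose_mul, mul_assoc]
    _ = (P * M * P)ᵀ := by rw [hM]
    _ = Pᵀ := by rw [hP2]
  · calc (M * Pᵀ)ᵀ = P * Mᵀ := by rw [transpose_mul, transpose_transpose]
    _ = P * M := by rw [hM]
    _ = (P * M)ᵀ := hP4.symm
    _ = Mᵀ * Pᵀ := by rw [transpose_mul]
    _ = M * Pᵀ := by rw [hM]
  · calc (Pᵀ * M)ᵀ = Mᵀ * P := by rw [transpose_mul, transpose_transpose]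
    _ = M * P := by rw [hM]
    _ = (M * P)ᵀ := hP3.symm
    _ = Pᵀ * Mᵀ := by rw [transpose_mul]
    _ = Pᵀ * M := by rw [hM]

section Lap
variable {n : ℕ} {W L : Matrix (Fin n) (Fin n) ℝ}

lemma lap_entry (hWdiag : ∀ i, W i i = 0)
    (hL : L = Matrix.of fun i j => if i = j then ∑ k, W i k else -(W i j)) (s j : Fin n) :
    L s j = (if s = j then ∑ k, W s k else 0) - W s j := by
  subst hL
  by_cases h : s = j
  · subst h; simp [hWdiag]
  · simp [h]

lemma lap_mulVec (hWdiag : ∀ i, W i i = 0)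
    (hL : L = Matrix.of fun i j => if i = j then ∑ k, W i k else -(W i j)) (x : Fin n → ℝ)
    (s : Fin n) : (L *ᵥ x) s = ∑ j, W s j * (x s - x j) := by
  have h : ∀ j, L s j * x j = (if s = j then (∑ k, W s k) * x j else 0) - W s j * x j := by
    intro j; rw [lap_entry hWdiag hL, sub_mul]; by_cases h : s = j <;> simp [h]
  simp only [mulVec, dotProduct, h, Finset.sum_sub_distrib, Finset.sum_ite_eq,
    Finset.mem_univ, if_true]
  rw [Finset.sum_mul, ← Finset.sum_sub_distrib]
  exact Finset.sum_congr rfl fun j _ => by ring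

lemma weight_symm (hWsym : Wᵀ = W) (a b : Fin n) : W a b = W b a :=
by
  conv_lhs => rw [← hWsym]
  exact Matrix.transpose_apply W a b

lemma lap_quad (hWsym : Wᵀ = W) (hWdiag : ∀ i, W i i = 0)
    (hL : L = Matrix.of fun i j => if i = j then ∑ k, W i k else -(W i j)) (x : Fin n → ℝ) :
    2 * (x ⬝ᵥ (L *ᵥ x)) = ∑ s, ∑ j, W s j * (x s - x j)^2 := by
  have h1 : x ⬝ᵥ (L *ᵥ x) = ∑ s, ∑ j, W s j * (x s * (x s - x j)) := by
    simp only [dotProduct, lap_mulVec hWdiag hL, Finset.mul_sum]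
    exact Finset.sum_congr rfl fun s _ => Finset.sum_congr rfl fun j _ => by ring
  have h2 : x ⬝ᵥ (L *ᵥ x) = ∑ s, ∑ j, W s j * (x j * (x j - x s)) := by
    rw [h1, Finset.sum_comm]
    exact Finset.sum_congr rfl fun s _ => Finset.sum_congr rfl fun j _ => by rw [weight_symm hWsym j s]
  calc 2 * (x ⬝ᵥ (L *ᵥ x))
      = (∑ s, ∑ j, W s j * (x s * (x s - x j))) + ∑ s, ∑ j, W s j * (x j * (x j - x s)) := by
        rw [two_mul]; nth_rewrite 1 [h1]; rw [h2]
    _ = ∑ s, ∑ j, (W s j * (x s * (x s - x j)) + W s j * (x j * (x j - x s))) := by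
        rw [← Finset.sum_add_distrib]
        exact Finset.sum_congr rfl fun s _ => by rw [← Finset.sum_add_distrib]
    _ = ∑ s, ∑ j, W s j * (x s - x j)^2 :=
        Finset.sum_congr rfl fun s _ => Finset.sum_congr rfl fun j _ => by ring

lemma lap_quad_nonneg (hWsym : Wᵀ = W) (hWnonneg : ∀ i j, 0 ≤ W i j)
    (hWdiag : ∀ i, W i i = 0)
    (hL : L = Matrix.of fun i j => if i = j then ∑ k, W i k else -(W i j)) (x : Fin n → ℝ) :
    0 ≤ x ⬝ᵥ (L *ᵥ x) := by
  have h := lap_quad hWsym hWdiag hL x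
  have hs : (0:ℝ) ≤ ∑ s, ∑ j, W s j * (x s - x j)^2 :=
    Finset.sum_nonneg fun s _ => Finset.sum_nonneg fun j _ =>
      mul_nonneg (hWnonneg s j) (sq_nonneg _)
  linarith

lemma lap_row_sum (hWdiag : ∀ i, W i i = 0)
    (hL : L = Matrix.of fun i j => if i = j then ∑ k, W i k else -(W i j)) (i : Fin n) :
    ∑ j, L i j = 0 := by
  simp [lap_entry hWdiag hL, Finset.sum_sub_distrib, Finset.sum_ite_eq]

lemma lap_symm_entry (hWsym : Wᵀ = W)
    (hL : L = Matrix.of fun i j => if i = j then ∑ k, W i k else -(W i j)) (i j : Fin n) :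
    L i j = L j i := by
  subst hL
  by_cases h : i = j
  · subst h; rfl
  · simp [h, Ne.symm h, weight_symm hWsym i j]

lemma lap_one (hWdiag : ∀ i, W i i = 0)
    (hL : L = Matrix.of fun i j => if i = j then ∑ k, W i k else -(W i j)) :
    L *ᵥ (fun _ => (1:ℝ)) = 0 := by
  funext s; rw [lap_mulVec hWdiag hL]; simp

lemma lap_col_sum (hWsym : Wᵀ = W) (hWdiag : ∀ i, W i i = 0)
    (hL : L = Matrix.of fun i j => if i = j then ∑ k, W i k else -(W i j)) (j : Fin n) :
    ∑ i, L i j = 0 := by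
  rw [Finset.sum_congr rfl fun i _ => lap_symm_entry hWsym hL i j]
  exact lap_row_sum hWdiag hL j

lemma lap_mulVec_sum (hWsym : Wᵀ = W) (hWdiag : ∀ i, W i i = 0)
    (hL : L = Matrix.of fun i j => if i = j then ∑ k, W i k else -(W i j)) (x : Fin n → ℝ) :
    ∑ i, (L *ᵥ x) i = 0 := by
  simp only [mulVec, dotProduct]
  rw [Finset.sum_comm]
  refine Finset.sum_eq_zero fun j _ => ?_
  rw [← Finset.sum_mul, lap_col_sum hWsym hWdiag hL, zero_mul]

lemma lap_ker {G : SimpleGraph (Fin n)} (hG : G.Connected)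
    (hadj : ∀ i j, G.Adj i j ↔ 0 < W i j) (hWsym : Wᵀ = W) (hWnonneg : ∀ i j, 0 ≤ W i j)
    (hWdiag : ∀ i, W i i = 0)
    (hL : L = Matrix.of fun i j => if i = j then ∑ k, W i k else -(W i j))
    (x : Fin n → ℝ) (hx : L *ᵥ x = 0) : ∀ a b, x a = x b := by
  have hq : ∑ s, ∑ j, W s j * (x s - x j)^2 = 0 := by
    rw [← lap_quad hWsym hWdiag hL, hx]; simp
  have hterm : ∀ s j, W s j * (x s - x j)^2 = 0 := by
    have h1 := (Finset.sum_eq_zero_iff_of_nonneg (fun s _ => Finset.sum_nonneg fun j _ =>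
      mul_nonneg (hWnonneg s j) (sq_nonneg _))).1 hq
    intro s j
    exact (Finset.sum_eq_zero_iff_of_nonneg fun j _ =>
      mul_nonneg (hWnonneg s j) (sq_nonneg _)).1 (h1 s (Finset.mem_univ s)) j (Finset.mem_univ j)
  have hadjeq : ∀ s j, G.Adj s j → x s = x j := by
    intro s j hsj
    have hw := (hadj s j).1 hsj
    rcases mul_eq_zero.1 (hterm s j) with h | h
    · exact absurd h (ne_of_gt hw)
    · have := pow_eq_zero_iff (n := 2) (by norm_num) |>.1 h
      linarith [sub_eq_zero.1 this]
  intro a b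
  obtain ⟨p⟩ := hG.preconnected a b
  induction p with
  | nil => rfl
  | cons h q ih => exact (hadjeq _ _ h).trans ih

end Lap

section PL
variable {n : ℕ} {W L P : Matrix (Fin n) (Fin n) ℝ} {G : SimpleGraph (Fin n)}

lemma lap_transpose (hWsym : Wᵀ = W)
    (hL : L = Matrix.of fun i j => if i = j then ∑ k, W i k else -(W i j)) : Lᵀ = L := by
  ext i j
  rw [Matrix.transpose_apply]
  exact lap_symm_entry hWsym hL j i

lemma llp_eq (hLsym : Lᵀ = L) (hP : IsMoorePenrose L P) : L * (L * P) = L := by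
  have h : (L * (L * P))ᵀ = L := by
    rw [transpose_mul, hP.2.2.1, hLsym]
    exact hP.1
  calc L * (L * P) = (L * (L * P))ᵀᵀ := (transpose_transpose _).symm
  _ = Lᵀ := by rw [h]
  _ = L := hLsym

lemma lp_id (hn : 0 < n) (hG : G.Connected)
    (hadj : ∀ i j, G.Adj i j ↔ 0 < W i j) (hWsym : Wᵀ = W) (hWnonneg : ∀ i j, 0 ≤ W i j)
    (hWdiag : ∀ i, W i i = 0)
    (hL : L = Matrix.of fun i j => if i = j then ∑ k, W i k else -(W i j))
    (hP : IsMoorePenrose L P) (w : Fin n → ℝ) (hw : ∑ i, w i = 0) :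
    L *ᵥ (P *ᵥ w) = w := by
  set z : Fin n → ℝ := L *ᵥ (P *ᵥ w) - w with hz_def
  have hz : L *ᵥ z = 0 := by
    rw [hz_def, mulVec_sub, mulVec_mulVec, mulVec_mulVec, Matrix.mul_assoc,
      llp_eq (lap_transpose hWsym hL) hP, sub_eq_zero]
  have hconst := lap_ker hG hadj hWsym hWnonneg hWdiag hL z hz
  have hsum : ∑ i, z i = 0 := by
    rw [hz_def]
    simp only [Pi.sub_apply, Finset.sum_sub_distrib, hw, sub_zero]
    exact lap_mulVec_sum hWsym hWdiag hL (P *ᵥ w)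
  have hzero : ∀ i, z i = 0 := by
    intro i
    have h1 : ∑ j, z j = (n : ℝ) * z i := by
      rw [Finset.sum_congr rfl fun j _ => hconst j i]
      simp [Finset.card_univ, mul_comm]
    have h2 : (n : ℝ) * z i = 0 := by rw [← h1, hsum]
    rcases mul_eq_zero.1 h2 with h | h
    · exact absurd h (by positivity)
    · exact h
  have hz0 : L *ᵥ (P *ᵥ w) - w = 0 := funext hzero
  exact sub_eq_zero.1 hz0

lemma single_sub_sum (a b : Fin n) :
    ∑ i, (Pi.single a 1 - Pi.single b 1 : Fin n → ℝ) i = 0 := by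
  simp [Finset.sum_sub_distrib, Pi.single_apply]

lemma min_principle (hn : 0 < n) (hG : G.Connected)
    (hadj : ∀ i j, G.Adj i j ↔ 0 < W i j) (hWsym : Wᵀ = W) (hWnonneg : ∀ i j, 0 ≤ W i j)
    (hWdiag : ∀ i, W i i = 0)
    (hL : L = Matrix.of fun i j => if i = j then ∑ k, W i k else -(W i j))
    (hP : IsMoorePenrose L P) (a b : Fin n) :
    ∀ j, (P *ᵥ (Pi.single a 1 - Pi.single b 1)) b ≤ (P *ᵥ (Pi.single a 1 - Pi.single b 1)) j := by
  set u : Fin n → ℝ := P *ᵥ (Pi.single a 1 - Pi.single b 1) with hu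
  have hLu : L *ᵥ u = Pi.single a 1 - Pi.single b 1 :=
    lp_id hn hG hadj hWsym hWnonneg hWdiag hL hP _ (single_sub_sum a b)
  obtain ⟨c, -, hc⟩ := Finset.exists_min_image Finset.univ u ⟨b, Finset.mem_univ b⟩
  have hc' : ∀ j, u c ≤ u j := fun j => hc j (Finset.mem_univ j)
  have hstep : ∀ s, s ≠ b → u s = u c → ∀ t, G.Adj s t → u t = u c := by
    intro s hsb hs t hst
    have h1 : (L *ᵥ u) s = ∑ j, W s j * (u s - u j) := lap_mulVec hWdiag hL u s
    have h2 : 0 ≤ (L *ᵥ u) s := by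
      rw [hLu]
      simp only [Pi.sub_apply, Pi.single_apply, if_neg hsb, sub_zero]
      split_ifs <;> norm_num
    have h3 : ∀ j ∈ Finset.univ, W s j * (u s - u j) ≤ 0 := fun j _ =>
      mul_nonpos_of_nonneg_of_nonpos (hWnonneg s j) (by have := hc' j; linarith [hs])
    have h4 : ∑ j, W s j * (u s - u j) = 0 :=
      le_antisymm (Finset.sum_nonpos h3) (by rw [← h1]; exact h2)
    have h5 := (Finset.sum_eq_zero_iff_of_nonpos h3).1 h4 t (Finset.mem_univ t)
    have hw := (hadj s t).1 hst
    rcases mul_eq_zero.1 h5 with h | h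
    · exact absurd h (ne_of_gt hw)
    · exact (sub_eq_zero.1 h).symm.trans hs
  have hwalk : ∀ s b' (p : G.Walk s b'), u s = u c → b' = b → u b' = u c := by
    intro s b' p
    induction p with
    | nil => exact fun h _ => h
    | @cons x t y hxt q ih =>
      intro hx hy
      by_cases hxb : x = b
      · subst hy; rw [hxb] at hx; exact hx
      · exact ih (hstep x hxb hx t hxt) hy
  obtain ⟨p⟩ := hG.preconnected c b
  have hb : u b = u c := hwalk c b p rfl rfl
  intro j
  rw [hb]
  exact hc' j

lemma sdot (y : Fin n → ℝ) (i j : Fin n) :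
    (Pi.single i 1 - Pi.single j 1 : Fin n → ℝ) ⬝ᵥ y = y i - y j := by
  simp only [dotProduct, Pi.sub_apply, Pi.single_apply, sub_mul, ite_mul, one_mul, zero_mul,
    Finset.sum_sub_distrib, Finset.sum_ite_eq', Finset.mem_univ, if_true]

lemma eff_triangle (hn : 0 < n) (hG : G.Connected)
    (hadj : ∀ i j, G.Adj i j ↔ 0 < W i j) (hWsym : Wᵀ = W) (hWnonneg : ∀ i j, 0 ≤ W i j)
    (hWdiag : ∀ i, W i i = 0)
    (hL : L = Matrix.of fun i j => if i = j then ∑ k, W i k else -(W i j))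
    (hP : IsMoorePenrose L P) (i j k : Fin n) :
    (Pi.single i 1 - Pi.single k 1 : Fin n → ℝ) ⬝ᵥ (P *ᵥ (Pi.single i 1 - Pi.single k 1)) ≤
    (Pi.single i 1 - Pi.single j 1 : Fin n → ℝ) ⬝ᵥ (P *ᵥ (Pi.single i 1 - Pi.single j 1)) +
    (Pi.single j 1 - Pi.single k 1 : Fin n → ℝ) ⬝ᵥ (P *ᵥ (Pi.single j 1 - Pi.single k 1)) := by
  set v : Fin n → ℝ := P *ᵥ (Pi.single i 1 - Pi.single j 1) with hv
  set t : Fin n → ℝ := P *ᵥ (Pi.single j 1 - Pi.single k 1) with ht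
  set u : Fin n → ℝ := P *ᵥ (Pi.single i 1 - Pi.single k 1) with hu2
  have hx : (Pi.single i 1 - Pi.single k 1 : Fin n → ℝ) =
      (Pi.single i 1 - Pi.single j 1) + (Pi.single j 1 - Pi.single k 1) :=
    (sub_add_sub_cancel _ _ _).symm
  have huvt : u = v + t := by
    rw [hu2, hv, ht, hx, mulVec_add]
  have h1 : v j ≤ v k := min_principle hn hG hadj hWsym hWnonneg hWdiag hL hP i j k
  have h2 : t i ≤ t j := by
    have h3 := min_principle hn hG hadj hWsym hWnonneg hWdiag hL hP k j i
    have h4 : P *ᵥ (Pi.single k 1 - Pi.single j 1) = -t := by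
      rw [ht, ← mulVec_neg, neg_sub]
    rw [h4] at h3
    simp only [Pi.neg_apply] at h3
    linarith
  rw [sdot, sdot, sdot]
  have e1 : u i = v i + t i := by rw [huvt]; rfl
  have e2 : u k = v k + t k := by rw [huvt]; rfl
  linarith

lemma const_sum_zero (hn : 0 < n) (z : Fin n → ℝ) (hconst : ∀ a b, z a = z b)
    (hsum : ∑ i, z i = 0) : z = 0 := by
  funext i
  have h1 : ∑ j, z j = (n : ℝ) * z i := by
    rw [Finset.sum_congr rfl fun j _ => hconst j i]
    simp [Finset.card_univ, mul_comm]
  have h2 : (n : ℝ) * z i = 0 := by rw [← h1, hsum]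
  rcases mul_eq_zero.1 h2 with h | h
  · exact absurd h (by positivity)
  · exact h

lemma p_psd (hWsym : Wᵀ = W) (hWnonneg : ∀ i j, 0 ≤ W i j) (hWdiag : ∀ i, W i i = 0)
    (hL : L = Matrix.of fun i j => if i = j then ∑ k, W i k else -(W i j))
    (hP : IsMoorePenrose L P) (x : Fin n → ℝ) : 0 ≤ x ⬝ᵥ (P *ᵥ x) := by
  have hPsym : Pᵀ = P := mp_symm (lap_transpose hWsym hL) hP
  have h : x ⬝ᵥ (P *ᵥ x) = (P *ᵥ x) ⬝ᵥ (L *ᵥ (P *ᵥ x)) := by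
    conv_lhs => rw [← hP.2.1]
    rw [← mulVec_mulVec, ← mulVec_mulVec, dotProduct_mulVec, ← mulVec_transpose, hPsym]
  rw [h]
  exact lap_quad_nonneg hWsym hWnonneg hWdiag hL _

lemma pv_eq (hn : 0 < n) (hG : G.Connected)
    (hadj : ∀ i j, G.Adj i j ↔ 0 < W i j) (hWsym : Wᵀ = W) (hWnonneg : ∀ i j, 0 ≤ W i j)
    (hWdiag : ∀ i, W i i = 0)
    (hL : L = Matrix.of fun i j => if i = j then ∑ k, W i k else -(W i j))
    (hP : IsMoorePenrose L P) (μ : ℝ) (v : Fin n → ℝ) (hv : L *ᵥ v = μ • v) (hμ : 0 < μ) :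
    (∑ i, v i = 0) ∧ P *ᵥ v = μ⁻¹ • v := by
  have hμ0 : μ ≠ 0 := ne_of_gt hμ
  have hsumv : ∑ i, v i = 0 := by
    have h0 := lap_mulVec_sum hWsym hWdiag hL v
    rw [hv] at h0
    have h1 : μ * ∑ i, v i = 0 := by rw [Finset.mul_sum]; simpa using h0
    rcases mul_eq_zero.1 h1 with h | h
    · exact absurd h hμ0
    · exact h
  have hv' : L *ᵥ (μ⁻¹ • v) = v := by
    rw [mulVec_smul, hv, smul_smul, inv_mul_cancel₀ hμ0, one_smul]
  have hLPv : L *ᵥ (P *ᵥ v) = v :=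
    lp_id hn hG hadj hWsym hWnonneg hWdiag hL hP v hsumv
  have hone : (P * L) *ᵥ (fun _ => (1:ℝ)) = 0 := by
    rw [← mulVec_mulVec, lap_one hWdiag hL, mulVec_zero]
  have hPvsum : ∑ i, (P *ᵥ v) i = 0 := by
    calc ∑ i, (P *ᵥ v) i = (fun _ => (1:ℝ)) ⬝ᵥ (P *ᵥ v) := by simp [dotProduct]
    _ = (fun _ => (1:ℝ)) ⬝ᵥ ((P * L) *ᵥ (μ⁻¹ • v)) := by
        rw [← mulVec_mulVec, hv']
    _ = ((fun _ => (1:ℝ)) ᵥ* (P * L)) ⬝ᵥ (μ⁻¹ • v) := dotProduct_mulVec _ _ _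
    _ = ((P * L)ᵀ *ᵥ fun _ => (1:ℝ)) ⬝ᵥ (μ⁻¹ • v) := by rw [mulVec_transpose]
    _ = ((P * L) *ᵥ fun _ => (1:ℝ)) ⬝ᵥ (μ⁻¹ • v) := by rw [hP.2.2.2]
    _ = 0 := by rw [hone, zero_dotProduct]
  have hd : L *ᵥ (P *ᵥ v - μ⁻¹ • v) = 0 := by
    rw [mulVec_sub, hLPv, hv', sub_self]
  have hdsum : ∑ i, (P *ᵥ v - μ⁻¹ • v) i = 0 := by
    simp only [Pi.sub_apply, Finset.sum_sub_distrib, hPvsum, Pi.smul_apply, smul_eq_mul,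
      ← Finset.mul_sum, hsumv, mul_zero, sub_zero]
  have := const_sum_zero hn _ (lap_ker hG hadj hWsym hWnonneg hWdiag hL _ hd) hdsum
  refine ⟨hsumv, sub_eq_zero.1 this⟩

end PL

/-- For a connected weighted graph with weighted Laplacian `L`, every positive eigenvalue
`μ` of `L` (in particular the algebraic connectivity `λ₂`) satisfies
`μ ≥ 2 / (n · R̃_max)` where `R̃_max` is the maximum effective resistance over vertex
pairs, and consequently `μ ≥ 2 / (n · D · R_max)` where `D` is the diameter and `R_max`
the maximum effective resistance over edges. -/
theorem lambda2_ge_of_effective_resistance {n : ℕ} (hn : 2 ≤ n)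
    (G : SimpleGraph (Fin n)) (hG : G.Connected)
    (W : Matrix (Fin n) (Fin n) ℝ) (hWsym : Wᵀ = W) (hWnonneg : ∀ i j, 0 ≤ W i j)
    (hWdiag : ∀ i, W i i = 0) (hadj : ∀ i j, G.Adj i j ↔ 0 < W i j)
    (L : Matrix (Fin n) (Fin n) ℝ)
    (hL : L = Matrix.of fun i j => if i = j then ∑ k, W i k else -(W i j))
    (P : Matrix (Fin n) (Fin n) ℝ) (hP : IsMoorePenrose L P) :
    let R : Fin n → Fin n → ℝ := fun i j =>
      (Pi.single i 1 - Pi.single j 1) ⬝ᵥ (P *ᵥ (Pi.single i 1 - Pi.single j 1))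
    let Rtmax : ℝ := sSup {r : ℝ | ∃ i j, r = R i j}
    let Rmax : ℝ := sSup {r : ℝ | ∃ i j, G.Adj i j ∧ r = R i j}
    ∀ (μ : ℝ) (v : Fin n → ℝ), v ≠ 0 → L *ᵥ v = μ • v → 0 < μ →
      2 / ((n : ℝ) * Rtmax) ≤ μ ∧ 2 / ((n : ℝ) * (G.diam : ℝ) * Rmax) ≤ μ := by
  intro R Rtmax Rmax μ v hv0 hv hμ
  have hn0 : 0 < n := by omega
  have _inst : Nonempty (Fin n) := ⟨⟨0, hn0⟩⟩
  set i0 : Fin n := ⟨0, hn0⟩ with hi0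
  have hμ0 : μ ≠ 0 := ne_of_gt hμ
  have hPsym : Pᵀ = P := mp_symm (lap_transpose hWsym hL) hP
  have hPs : ∀ a b, P a b = P b a := fun a b => weight_symm hPsym a b
  have hRdef : ∀ i j, R i j = (Pi.single i 1 - Pi.single j 1 : Fin n → ℝ) ⬝ᵥ
      (P *ᵥ (Pi.single i 1 - Pi.single j 1)) := fun i j => rfl
  have hRnonneg : ∀ i j, 0 ≤ R i j := fun i j =>
    p_psd hWsym hWnonneg hWdiag hL hP _
  have hRform : ∀ i j, R i j = P i i + P j j - P i j - P j i := by
    intro i j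
    rw [hRdef, sdot, mulVec_sub, mulVec_single_one, mulVec_single_one]
    simp only [Pi.sub_apply, mul_one, Matrix.col_apply]
    ring
  have hRdiag : ∀ i, R i i = 0 := fun i => by rw [hRform]; ring
  have hTfin : ({r : ℝ | ∃ i j, r = R i j}).Finite := by
    apply Set.Finite.subset (Set.finite_range fun p : Fin n × Fin n => R p.1 p.2)
    rintro r ⟨i, j, rfl⟩; exact ⟨(i, j), rfl⟩
  have hRle : ∀ i j, R i j ≤ Rtmax := fun i j => le_csSup hTfin.bddAbove ⟨i, j, rfl⟩
  have hRtnonneg : 0 ≤ Rtmax := le_trans (hRnonneg i0 i0) (hRle i0 i0)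
  obtain ⟨hsumv, hPv⟩ := pv_eq hn0 hG hadj hWsym hWnonneg hWdiag hL hP μ v hv hμ
  have hvPv : v ⬝ᵥ (P *ᵥ v) = μ⁻¹ * (v ⬝ᵥ v) := by
    rw [hPv]
    simp [dotProduct, Finset.mul_sum]
    exact Finset.sum_congr rfl fun i _ => by ring
  have hKey : ∑ i, ∑ j, v i * v j * R i j = -2 * (v ⬝ᵥ (P *ᵥ v)) := by
    calc ∑ i, ∑ j, v i * v j * R i j
        = ∑ i, ∑ j, ((v i * P i i) * v j + v i * (v j * P j j) - 2*(v i * (P i j * v j))) := by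
          refine Finset.sum_congr rfl fun i _ => Finset.sum_congr rfl fun j _ => ?_
          rw [hRform i j, hPs j i]; ring
      _ = ∑ i, ((v i * P i i) * (∑ j, v j) + v i * (∑ j, v j * P j j)
            - 2*(v i * ∑ j, P i j * v j)) := by
          refine Finset.sum_congr rfl fun i _ => ?_
          rw [Finset.sum_sub_distrib, Finset.sum_add_distrib, ← Finset.mul_sum,
            ← Finset.mul_sum, ← Finset.mul_sum, ← Finset.mul_sum]
      _ = ∑ i, (v i * (∑ j, v j * P j j) - 2*(v i * (P *ᵥ v) i)) := by
          refine Finset.sum_congr rfl fun i _ => ?_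
          rw [hsumv, mul_zero, zero_add]
          simp [mulVec, dotProduct]
      _ = (∑ i, v i) * (∑ j, v j * P j j) - 2 * (v ⬝ᵥ (P *ᵥ v)) := by
          rw [Finset.sum_sub_distrib, ← Finset.sum_mul, ← Finset.mul_sum]
          simp [dotProduct]
      _ = -2 * (v ⬝ᵥ (P *ᵥ v)) := by rw [hsumv, zero_mul, zero_sub]; ring
  have hvv : 0 < v ⬝ᵥ v := by
    obtain ⟨i, hi⟩ := Function.ne_iff.1 hv0
    exact Finset.sum_pos' (fun i _ => mul_self_nonneg _)
      ⟨i, Finset.mem_univ i, mul_self_pos.2 hi⟩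
  have hsum1 : -(∑ i, ∑ j, v i * v j * R i j) ≤ (∑ i, |v i|) * (∑ j, |v j|) * Rtmax := by
    have habs : ∀ i j, -(v i * v j * R i j) ≤ |v i| * |v j| * Rtmax := by
      intro i j
      have h1 : -(v i * v j) * R i j ≤ |v i * v j| * R i j :=
        mul_le_mul_of_nonneg_right (neg_le_abs _) (hRnonneg i j)
      have h2 : |v i * v j| * R i j ≤ |v i| * |v j| * Rtmax := by
        rw [abs_mul]
        exact mul_le_mul_of_nonneg_left (hRle i j) (by positivity)
      nlinarith [h1, h2]
    calc -(∑ i, ∑ j, v i * v j * R i j) = ∑ i, ∑ j, -(v i * v j * R i j) := by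
          simp [Finset.sum_neg_distrib]
      _ ≤ ∑ i, ∑ j, |v i| * |v j| * Rtmax :=
          Finset.sum_le_sum fun i _ => Finset.sum_le_sum fun j _ => habs i j
      _ = (∑ i, |v i|) * (∑ j, |v j|) * Rtmax := by
          rw [Finset.sum_mul_sum, Finset.sum_mul]
          exact Finset.sum_congr rfl fun i _ => by rw [Finset.sum_mul]
  have hCS : (∑ i, |v i|) * (∑ j, |v j|) ≤ (n:ℝ) * (v ⬝ᵥ v) := by
    have h := Finset.sum_mul_sq_le_sq_mul_sq Finset.univ (fun i => |v i|) (fun _ => (1:ℝ))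
    simp only [mul_one, one_pow, sq_abs, Finset.sum_const, Finset.card_univ,
      Fintype.card_fin, nsmul_eq_mul] at h
    have hvv2 : v ⬝ᵥ v = ∑ i, v i ^ 2 := by
      simp [dotProduct]; exact Finset.sum_congr rfl fun i _ => by ring
    calc (∑ i, |v i|) * (∑ j, |v j|) = (∑ i, |v i|)^2 := by ring
      _ ≤ (∑ i, v i ^ 2) * n := h
      _ = (n:ℝ) * (v ⬝ᵥ v) := by rw [hvv2]; ring
  have hg0 : 2 * μ⁻¹ * (v ⬝ᵥ v) ≤ (n:ℝ) * Rtmax * (v ⬝ᵥ v) := by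
    have e1 : -(∑ i, ∑ j, v i * v j * R i j) = 2 * μ⁻¹ * (v ⬝ᵥ v) := by
      rw [hKey, hvPv]; ring
    have e2 : (∑ i, |v i|) * (∑ j, |v j|) * Rtmax ≤ (n:ℝ) * (v ⬝ᵥ v) * Rtmax :=
      mul_le_mul_of_nonneg_right hCS hRtnonneg
    nlinarith [hsum1]
  have hg0' : 2 * μ⁻¹ ≤ (n:ℝ) * Rtmax := le_of_mul_le_mul_right hg0 hvv
  have hg1 : 2 ≤ μ * ((n:ℝ) * Rtmax) := by
    calc 2 = μ * (2 * μ⁻¹) := by field_simp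
      _ ≤ μ * ((n:ℝ) * Rtmax) := mul_le_mul_of_nonneg_left hg0' hμ.le
  have hpos1 : 0 < (n:ℝ) * Rtmax := by
    by_contra hc
    push_neg at hc
    have := mul_nonpos_of_nonneg_of_nonpos hμ.le hc
    linarith
  have hfirst : 2 / ((n:ℝ) * Rtmax) ≤ μ := (div_le_iff₀ hpos1).2 hg1
  by_cases hpos2 : 0 < (n:ℝ) * (G.diam : ℝ) * Rmax
  · have hrw : (n:ℝ) * (G.diam:ℝ) * Rmax = (n:ℝ) * ((G.diam:ℝ) * Rmax) := by ring
    have hDR : 0 < (G.diam:ℝ) * Rmax := by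
      by_contra hc
      push_neg at hc
      have := mul_nonpos_of_nonneg_of_nonpos (le_of_lt (by exact_mod_cast hn0 : (0:ℝ) < n)) hc
      rw [← hrw] at this
      linarith
    have hRmaxnn : 0 ≤ Rmax := by
      by_contra hc
      push_neg at hc
      have := mul_nonpos_of_nonneg_of_nonpos (Nat.cast_nonneg (α := ℝ) G.diam) hc.le
      linarith
    have hEfin : ({r : ℝ | ∃ i j, G.Adj i j ∧ r = R i j}).Finite := by
      apply Set.Finite.subset (Set.finite_range fun p : Fin n × Fin n => R p.1 p.2)
      rintro r ⟨i, j, -, rfl⟩; exact ⟨(i, j), rfl⟩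
    have hRedge : ∀ i j, G.Adj i j → R i j ≤ Rmax := fun i j h =>
      le_csSup hEfin.bddAbove ⟨i, j, h, rfl⟩
    have hwalkbd : ∀ (i j : Fin n) (p : G.Walk i j), R i j ≤ (p.length : ℝ) * Rmax := by
      intro i j p
      induction p with
      | nil => simp [hRdiag]
      | @cons x t y hxt q ih =>
        have htri : R x y ≤ R x t + R t y :=
          eff_triangle hn0 hG hadj hWsym hWnonneg hWdiag hL hP x t y
        have h1 : R x t ≤ Rmax := hRedge x t hxt
        have hlen : (((SimpleGraph.Walk.cons hxt q).length : ℕ) : ℝ) = (q.length : ℝ) + 1 := by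
          rw [SimpleGraph.Walk.length_cons]; push_cast; ring
        rw [hlen]
        nlinarith [ih]
    have hediam : G.ediam ≠ ⊤ := by
      obtain ⟨a, b, h⟩ := SimpleGraph.exists_edist_eq_ediam_of_finite (G := G)
      rw [← h]
      exact SimpleGraph.edist_ne_top_iff_reachable.2 (hG.preconnected a b)
    have hT : Rtmax ≤ (G.diam:ℝ) * Rmax := by
      have hne : Set.Nonempty {r : ℝ | ∃ i j, r = R i j} := ⟨R i0 i0, i0, i0, rfl⟩
      refine csSup_le hne ?_
      rintro r ⟨i, j, rfl⟩
      obtain ⟨p, hp⟩ := hG.exists_walk_length_eq_dist i j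
      have hd : ((G.dist i j : ℕ) : ℝ) ≤ (G.diam : ℝ) := by
        exact_mod_cast SimpleGraph.dist_le_diam hediam
      calc R i j ≤ (p.length : ℝ) * Rmax := hwalkbd i j p
        _ = ((G.dist i j : ℕ) : ℝ) * Rmax := by rw [hp]
        _ ≤ (G.diam:ℝ) * Rmax := mul_le_mul_of_nonneg_right hd hRmaxnn
    have hg2 : 2 ≤ μ * ((n:ℝ) * (G.diam:ℝ) * Rmax) := by
      have hmono : (n:ℝ) * Rtmax ≤ (n:ℝ) * ((G.diam:ℝ) * Rmax) :=
        mul_le_mul_of_nonneg_left hT (by positivity)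
      calc 2 ≤ μ * ((n:ℝ) * Rtmax) := hg1
        _ ≤ μ * ((n:ℝ) * ((G.diam:ℝ) * Rmax)) := mul_le_mul_of_nonneg_left hmono hμ.le
        _ = μ * ((n:ℝ) * (G.diam:ℝ) * Rmax) := by ring
    exact ⟨hfirst, (div_le_iff₀ hpos2).2 hg2⟩
  · push_neg at hpos2
    have hnp : 2 / ((n:ℝ) * (G.diam:ℝ) * Rmax) ≤ 0 :=
      div_nonpos_of_nonneg_of_nonpos (by norm_num) hpos2
    exact ⟨hfirst, hnp.trans hμ.le⟩
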